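/- For any nonempty closed set S ⊆ A^{ℕ₊}, the set D_S = ⋃_{α ∈ S} D_α is a nonempty subshift of A^ℤ, i.e., it is nonempty, closed in the product topology, and invariant under the shift. -/
import Mathlib


/-- The level `n` of a candidate 1-net: the arithmetic progression `2^n ℤ + k n`. -/
def netLevel (k : ℕ+ → ℤ) (n : ℕ+) : Set ℤ :=
  {i : ℤ | ∃ t : ℤ, i = 2 ^ (n : ℕ) * t + k n}

/-- A 1-net: the levels `2^n ℤ + k n`, for `n ≥ 1`, are pairwise disjoint. -/
def IsOneNet (k : ℕ+ → ℤ) : Prop :=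
  Pairwise fun m n : ℕ+ => Disjoint (netLevel k m) (netLevel k n)

/-- `D_α`: the Toeplitz configurations which are constantly `α n` on level
`2^n ℤ + k n` of some 1-net. -/
def Dconf {A : Type*} (α : ℕ+ → A) : Set (ℤ → A) :=
  {x | ∃ k : ℕ+ → ℤ, IsOneNet k ∧ ∀ n : ℕ+, ∀ i ∈ netLevel k n, x i = α n}

lemma mem_netLevel_iff {k : ℕ+ → ℤ} {n : ℕ+} {i : ℤ} :
    i ∈ netLevel k n ↔ (2 ^ (n : ℕ) : ℤ) ∣ i - k n := by
  constructor
  · rintro ⟨t, rfl⟩; exact ⟨t, by ring⟩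
  · rintro ⟨t, ht⟩; exact ⟨t, by linarith⟩

lemma netLevel_congr {k k' : ℕ+ → ℤ} (n : ℕ+) (h : (2 ^ (n : ℕ) : ℤ) ∣ k n - k' n) :
    netLevel k n = netLevel k' n := by
  ext i
  rw [mem_netLevel_iff, mem_netLevel_iff]
  constructor
  · intro hd
    have : i - k' n = (i - k n) + (k n - k' n) := by ring
    rw [this]; exact dvd_add hd h
  · intro hd
    have : i - k n = (i - k' n) - (k n - k' n) := by ring
    rw [this]; exact dvd_sub hd h

/-- The standard 1-net: `k n = 2^(n-1)`. -/
def stdNet : ℕ+ → ℤ := fun n => 2 ^ ((n : ℕ) - 1)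

lemma stdNet_isOneNet : IsOneNet stdNet := by
  have key : ∀ m n : ℕ+, m < n → Disjoint (netLevel stdNet m) (netLevel stdNet n) := by
    intro m n hmn
    rw [Set.disjoint_left]
    rintro i ⟨s, hs⟩ ⟨t, ht⟩
    obtain ⟨m', hm1⟩ : ∃ m', (m : ℕ) = m' + 1 := ⟨(m : ℕ) - 1, by have h := m.pos; omega⟩
    obtain ⟨n', hn1⟩ : ∃ n', (n : ℕ) = n' + 1 := ⟨(n : ℕ) - 1, by have h := n.pos; omega⟩
    have hmn' : m' < n' := by
      have : (m : ℕ) < (n : ℕ) := hmn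
      omega
    have heq : (2 : ℤ) ^ m' * (2 * s + 1) = 2 ^ n' * (2 * t + 1) := by
      have hs' : i = 2 ^ ((m : ℕ)) * s + 2 ^ ((m : ℕ) - 1) := hs
      have ht' : i = 2 ^ ((n : ℕ)) * t + 2 ^ ((n : ℕ) - 1) := ht
      rw [hm1] at hs'; rw [hn1] at ht'
      simp only [Nat.add_sub_cancel] at hs' ht'
      rw [pow_succ] at hs' ht'
      nlinarith [hs', ht']
    obtain ⟨d, hd1, hdpos⟩ : ∃ d, n' = m' + d ∧ 1 ≤ d := ⟨n' - m', by omega, by omega⟩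
    rw [hd1, pow_add, mul_assoc] at heq
    have h2 : (2 : ℤ) * s + 1 = 2 ^ d * (2 * t + 1) :=
      mul_left_cancel₀ (pow_ne_zero m' (by norm_num : (2:ℤ) ≠ 0)) heq
    have h3 : (2 : ℤ) ^ d = 2 * 2 ^ (d - 1) := by
      rw [← pow_succ']
      congr 1
      omega
    rw [h3, mul_assoc] at h2
    omega
  intro m n hmn
  rcases lt_or_gt_of_ne hmn with h | h
  · exact key m n h
  · exact (key n m h).symm

lemma Dconf_nonempty {A : Type*} (α : ℕ+ → A) : (Dconf α).Nonempty := by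
  classical
  refine ⟨fun i => if h : ∃ n : ℕ+, i ∈ netLevel stdNet n then α h.choose else α 1,
    stdNet, stdNet_isOneNet, ?_⟩
  intro n i hi
  have h : ∃ m : ℕ+, i ∈ netLevel stdNet m := ⟨n, hi⟩
  simp only [dif_pos h]
  congr 1
  by_contra hne
  exact Set.disjoint_left.mp (stdNet_isOneNet hne) h.choose_spec hi

lemma Dconf_shift {A : Type*} {α : ℕ+ → A} {x : ℤ → A} (hx : x ∈ Dconf α) :
    (fun i : ℤ => x (i + 1)) ∈ Dconf α := by
  obtain ⟨k, hk, hval⟩ := hx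
  refine ⟨fun n => k n - 1, ?_, ?_⟩
  · intro m n hmn
    have hdis : Disjoint (netLevel k m) (netLevel k n) := hk hmn
    rw [Set.disjoint_left] at hdis ⊢
    rintro i ⟨s, hs⟩ ⟨t, ht⟩
    have hs' : i = 2 ^ ((m : ℕ)) * s + (k m - 1) := hs
    have ht' : i = 2 ^ ((n : ℕ)) * t + (k n - 1) := ht
    exact hdis (⟨s, by linarith⟩ : i + 1 ∈ netLevel k m) ⟨t, by linarith⟩
  · rintro n i ⟨t, ht⟩
    have ht' : i = 2 ^ ((n : ℕ)) * t + (k n - 1) := ht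
    exact hval n (i + 1) ⟨t, by linarith⟩

section Closed

variable {A : Type*} [Fintype A] [TopologicalSpace A] [DiscreteTopology A]

/-- Compact parameter space: residues of a net mod `2^n`, together with a symbol sequence. -/
abbrev NetSpace (A : Type*) := (∀ n : ℕ+, Fin (2 ^ (n : ℕ))) × (ℕ+ → A)

/-- The integer net associated to a residue function. -/
def kOf (κ : ∀ n : ℕ+, Fin (2 ^ (n : ℕ))) : ℕ+ → ℤ := fun n => ((κ n : ℕ) : ℤ)

lemma toNat_emod_lt (a : ℤ) (m : ℕ+) : (a % 2 ^ (m : ℕ)).toNat < 2 ^ (m : ℕ) := by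
  have h0 : (0 : ℤ) < 2 ^ (m : ℕ) := by positivity
  have h1 : 0 ≤ a % 2 ^ (m : ℕ) := Int.emod_nonneg _ (by positivity)
  have h2 : a % 2 ^ (m : ℕ) < 2 ^ (m : ℕ) := Int.emod_lt_of_pos _ h0
  have h3 : ((2 ^ (m : ℕ) : ℕ) : ℤ) = (2 : ℤ) ^ (m : ℕ) := by push_cast; ring
  omega

/-- Reduce a net modulo `2^n` at each level. -/
def reduceNet (k : ℕ+ → ℤ) : ∀ n : ℕ+, Fin (2 ^ (n : ℕ)) :=
  fun m => ⟨(k m % 2 ^ (m : ℕ)).toNat, toNat_emod_lt _ _⟩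

/-- Reducing a net mod `2^n` does not change its levels. -/
lemma netLevel_reduce (k : ℕ+ → ℤ) (n : ℕ+) :
    netLevel (kOf (reduceNet k)) n = netLevel k n := by
  apply netLevel_congr
  have h1 : 0 ≤ k n % 2 ^ ((n : ℕ)) := Int.emod_nonneg _ (by positivity)
  have h2 : kOf (reduceNet k) n = k n % 2 ^ ((n : ℕ)) := by
    simp [kOf, reduceNet, Int.toNat_of_nonneg h1]
  rw [h2]
  have h3 : k n % 2 ^ ((n : ℕ)) - k n = -(2 ^ ((n : ℕ)) * (k n / 2 ^ ((n : ℕ)))) := by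
    have := Int.mul_ediv_add_emod (k n) (2 ^ ((n : ℕ)))
    linarith
  rw [h3]
  exact dvd_neg.mpr (dvd_mul_right _ _)

/-- Finite-stage constraint sets in the compact parameter space. -/
def Fset (S : Set (ℕ+ → A)) (x : ℤ → A) (j : ℕ) : Set (NetSpace A) :=
  {p | p.2 ∈ S ∧
    (∀ m n : ℕ+, (m : ℕ) ≤ j → (n : ℕ) ≤ j → m ≠ n →
      Disjoint (netLevel (kOf p.1) m) (netLevel (kOf p.1) n)) ∧
    ∀ n : ℕ+, (n : ℕ) ≤ j → ∀ i ∈ netLevel (kOf p.1) n, i.natAbs ≤ j → x i = p.2 n}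

lemma isClosed_pullback_discrete {X Y : Type*} [TopologicalSpace X] [TopologicalSpace Y]
    [DiscreteTopology Y] {f : X → Y} (hf : Continuous f) (P : Y → Prop) :
    IsClosed {x | P (f x)} :=
  (isClosed_discrete {y | P y}).preimage hf

lemma isClosed_Fset (S : Set (ℕ+ → A)) (hcl : IsClosed S) (x : ℤ → A) (j : ℕ) :
    IsClosed (Fset S x j) := by
  have h1 : IsClosed {p : NetSpace A | p.2 ∈ S} := hcl.preimage continuous_snd
  have h2 : IsClosed {p : NetSpace A |
      ∀ m n : ℕ+, (m : ℕ) ≤ j → (n : ℕ) ≤ j → m ≠ n →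
        Disjoint (netLevel (kOf p.1) m) (netLevel (kOf p.1) n)} := by
    have he : {p : NetSpace A |
        ∀ m n : ℕ+, (m : ℕ) ≤ j → (n : ℕ) ≤ j → m ≠ n →
          Disjoint (netLevel (kOf p.1) m) (netLevel (kOf p.1) n)} =
        ⋂ (m : ℕ+), ⋂ (n : ℕ+), {p : NetSpace A | (m : ℕ) ≤ j → (n : ℕ) ≤ j → m ≠ n →
          Disjoint (netLevel (kOf p.1) m) (netLevel (kOf p.1) n)} := by
      ext p; simp only [Set.mem_setOf_eq, Set.mem_iInter]
    rw [he]
    refine isClosed_iInter fun m => isClosed_iInter fun n => ?_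
    have hcont : Continuous fun p : NetSpace A => (p.1 m, p.1 n) :=
      Continuous.prodMk ((continuous_apply m).comp continuous_fst)
        ((continuous_apply n).comp continuous_fst)
    exact isClosed_pullback_discrete hcont
      (fun q : Fin (2 ^ (m : ℕ)) × Fin (2 ^ (n : ℕ)) =>
        (m : ℕ) ≤ j → (n : ℕ) ≤ j → m ≠ n →
          Disjoint (netLevel (fun _ => ((q.1 : ℕ) : ℤ)) m)
            (netLevel (fun _ => ((q.2 : ℕ) : ℤ)) n))
  have h3 : IsClosed {p : NetSpace A |
      ∀ n : ℕ+, (n : ℕ) ≤ j → ∀ i ∈ netLevel (kOf p.1) n, i.natAbs ≤ j → x i = p.2 n} := by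
    have he : {p : NetSpace A |
        ∀ n : ℕ+, (n : ℕ) ≤ j → ∀ i ∈ netLevel (kOf p.1) n, i.natAbs ≤ j → x i = p.2 n} =
        ⋂ (n : ℕ+), {p : NetSpace A | (n : ℕ) ≤ j →
          ∀ i ∈ netLevel (kOf p.1) n, i.natAbs ≤ j → x i = p.2 n} := by
      ext p; simp only [Set.mem_setOf_eq, Set.mem_iInter]
    rw [he]
    refine isClosed_iInter fun n => ?_
    have hcont : Continuous fun p : NetSpace A => (p.1 n, p.2 n) :=
      Continuous.prodMk ((continuous_apply n).comp continuous_fst)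
        ((continuous_apply n).comp continuous_snd)
    exact isClosed_pullback_discrete hcont
      (fun q : Fin (2 ^ (n : ℕ)) × A => (n : ℕ) ≤ j →
        ∀ i ∈ netLevel (fun _ => ((q.1 : ℕ) : ℤ)) n, i.natAbs ≤ j → x i = q.2)
  have he : Fset S x j = {p : NetSpace A | p.2 ∈ S} ∩
      ({p : NetSpace A | ∀ m n : ℕ+, (m : ℕ) ≤ j → (n : ℕ) ≤ j → m ≠ n →
        Disjoint (netLevel (kOf p.1) m) (netLevel (kOf p.1) n)} ∩
       {p : NetSpace A | ∀ n : ℕ+, (n : ℕ) ≤ j →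
        ∀ i ∈ netLevel (kOf p.1) n, i.natAbs ≤ j → x i = p.2 n}) := by
    ext p
    simp only [Fset, Set.mem_setOf_eq, Set.mem_inter_iff]
  rw [he]
  exact h1.inter (h2.inter h3)

lemma DS_closed (S : Set (ℕ+ → A)) (hcl : IsClosed S) :
    IsClosed (⋃ α ∈ S, Dconf α) := by
  rw [← closure_subset_iff_isClosed]
  intro x hx
  -- the finite-stage sets are nonempty
  have hne : ∀ j : ℕ, (Fset S x j).Nonempty := by
    intro j
    -- the cylinder around x of radius j is open
    set U : Set (ℤ → A) := {y | ∀ i : ℤ, i.natAbs ≤ j → y i = x i} with hU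
    have hUopen : IsOpen U := by
      have he : U = ⋂ i ∈ {i : ℤ | i.natAbs ≤ j}, (fun y : ℤ → A => y i) ⁻¹' {x i} := by
        ext y
        simp only [hU, Set.mem_setOf_eq, Set.mem_iInter, Set.mem_preimage,
          Set.mem_singleton_iff]
      rw [he]
      refine Set.Finite.isOpen_biInter ?_ ?_
      · apply Set.Finite.subset (Set.finite_Icc (-(j : ℤ)) (j : ℤ))
        intro i hi
        simp only [Set.mem_setOf_eq] at hi
        simp only [Set.mem_Icc]
        omega
      · intro i _
        exact (isOpen_discrete _).preimage (continuous_apply i)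
    have hxU : x ∈ U := fun i _ => rfl
    obtain ⟨y, hyU, hyD⟩ := mem_closure_iff.mp hx U hUopen hxU
    have hyU' : ∀ i : ℤ, i.natAbs ≤ j → y i = x i := hyU
    simp only [Set.mem_iUnion] at hyD
    obtain ⟨α, hαS, k, hk, hval⟩ := hyD
    refine ⟨⟨reduceNet k, α⟩, hαS, ?_, ?_⟩
    · intro m n _ _ hmn
      show Disjoint (netLevel (kOf (reduceNet k)) m) (netLevel (kOf (reduceNet k)) n)
      rw [netLevel_reduce k m, netLevel_reduce k n]
      exact hk hmn
    · intro n _ i hi hij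
      show x i = α n
      rw [netLevel_reduce k n] at hi
      rw [← hyU' i hij]
      exact hval n i hi
  -- extract a point of the intersection
  obtain ⟨⟨κ, α⟩, hp⟩ :=
    IsCompact.nonempty_iInter_of_sequence_nonempty_isCompact_isClosed (Fset S x)
      (fun j p hp => ⟨hp.1, fun m n hm hn hmn => hp.2.1 m n (by omega) (by omega) hmn,
        fun n hn i hi hij => hp.2.2 n (by omega) i hi (by omega)⟩)
      hne (isClosed_Fset S hcl x 0).isCompact (isClosed_Fset S hcl x)
  simp only [Set.mem_iInter] at hp
  have hαS : α ∈ S := (hp 0).1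
  simp only [Set.mem_iUnion]
  refine ⟨α, hαS, kOf κ, ?_, ?_⟩
  · intro m n hmn
    exact (hp (max (m : ℕ) (n : ℕ))).2.1 m n (le_max_left _ _) (le_max_right _ _) hmn
  · intro n i hi
    exact (hp (max (n : ℕ) i.natAbs)).2.2 n (le_max_left _ _) i hi (le_max_right _ _)

end Closed

/-- For any nonempty closed `S ⊆ A^{ℕ₊}`, the set `D_S = ⋃_{α ∈ S} D_α` is a nonempty
subshift: nonempty, closed in the product topology, and shift-invariant. -/
theorem DS_nonempty_subshift {A : Type*} [Fintype A]
    [TopologicalSpace A] [DiscreteTopology A]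
    (S : Set (ℕ+ → A)) (hne : S.Nonempty) (hcl : IsClosed S) :
    (⋃ α ∈ S, Dconf α).Nonempty ∧ IsClosed (⋃ α ∈ S, Dconf α) ∧
      ∀ x ∈ ⋃ α ∈ S, Dconf α, (fun i : ℤ => x (i + 1)) ∈ ⋃ α ∈ S, Dconf α := by
  obtain ⟨α₀, hα₀⟩ := hne
  refine ⟨?_, DS_closed S hcl, ?_⟩
  · obtain ⟨x, hx⟩ := Dconf_nonempty α₀
    exact ⟨x, Set.mem_biUnion hα₀ hx⟩
  · intro x hx
    simp only [Set.mem_iUnion] at hx ⊢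
    obtain ⟨α, hαS, hα⟩ := hx
    exact ⟨α, hαS, Dconf_shift hα⟩
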